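/- (Weak dependence of score on mixing proportions.) Fix μ₁ ∈ ℝ, σ > 0, two mixing proportions π, π' ∈ (0,1), and x ∈ ℝ. Writing p_{μ₂,π}(x) = π φ_{μ₁,σ}(x) + (1−π) φ_{μ₂,σ}(x), one has s_{p_{μ₂,π}}(x) − s_{p_{μ₂,π'}}(x) → 0 as μ₂ → +∞. -/

import Mathlib

open MeasureTheory Filter

/-- Gaussian density with mean `μ` and standard deviation `σ`. -/
noncomputable def gaussian (μ σ : ℝ) (x : ℝ) : ℝ :=
  (σ * Real.sqrt (2 * Real.pi))⁻¹ * Real.exp (-(x - μ) ^ 2 / (2 * σ ^ 2))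

/-- The score of a density `ρ`: the derivative of its log. -/
noncomputable def score (ρ : ℝ → ℝ) (x : ℝ) : ℝ :=
  deriv (fun y => Real.log (ρ y)) x

/-- Fisher divergence between densities `q` and `p`. -/
noncomputable def fisherDiv (q p : ℝ → ℝ) : ℝ :=
  ∫ x : ℝ, q x * (score q x - score p x) ^ 2

lemma gaussian_pos (μ σ x : ℝ) (hσ : 0 < σ) : 0 < gaussian μ σ x := by
  unfold gaussian
  have h : 0 < Real.sqrt (2 * Real.pi) := Real.sqrt_pos.2 (by positivity)
  positivity

lemma hasDerivAt_gaussian (μ σ x : ℝ) (hσ : 0 < σ) :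
    HasDerivAt (gaussian μ σ) (gaussian μ σ x * ((μ - x) / σ ^ 2)) x := by
  have h1 : HasDerivAt (fun y : ℝ => -(y - μ) ^ 2 / (2 * σ ^ 2)) ((μ - x) / σ ^ 2) x := by
    have h0 : HasDerivAt (fun y : ℝ => y - μ) 1 x := (hasDerivAt_id x).sub_const μ
    have h2 := ((h0.pow 2).neg).div_const (2 * σ ^ 2)
    refine h2.congr_deriv ?_
    rw [div_eq_div_iff (by positivity) (by positivity)]
    norm_num
    ring
  have h3 := (h1.exp).const_mul ((σ * Real.sqrt (2 * Real.pi))⁻¹)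
  exact h3.congr_deriv (by unfold gaussian; ring)

lemma score_mixture (μ₁ μ₂ σ w x : ℝ) (hσ : 0 < σ) (hw : w ∈ Set.Ioo (0 : ℝ) 1) :
    score (fun y => w * gaussian μ₁ σ y + (1 - w) * gaussian μ₂ σ y) x =
      (w * (gaussian μ₁ σ x * ((μ₁ - x) / σ ^ 2))
        + (1 - w) * (gaussian μ₂ σ x * ((μ₂ - x) / σ ^ 2)))
      / (w * gaussian μ₁ σ x + (1 - w) * gaussian μ₂ σ x) := by
  have hpos : 0 < w * gaussian μ₁ σ x + (1 - w) * gaussian μ₂ σ x := by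
    have := gaussian_pos μ₁ σ x hσ
    have := gaussian_pos μ₂ σ x hσ
    have := hw.1
    have h2 : 0 < 1 - w := by linarith [hw.2]
    positivity
  have hd : HasDerivAt (fun y => w * gaussian μ₁ σ y + (1 - w) * gaussian μ₂ σ y)
      (w * (gaussian μ₁ σ x * ((μ₁ - x) / σ ^ 2))
        + (1 - w) * (gaussian μ₂ σ x * ((μ₂ - x) / σ ^ 2))) x :=
    ((hasDerivAt_gaussian μ₁ σ x hσ).const_mul w).add
      ((hasDerivAt_gaussian μ₂ σ x hσ).const_mul (1 - w))
  exact (hd.log hpos.ne').deriv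

lemma tendsto_mul_exp_neg_mul_sq (a : ℝ) (ha : 0 < a) :
    Tendsto (fun t : ℝ => t * Real.exp (-(a * t ^ 2))) atTop (nhds 0) := by
  have hlim : Tendsto (fun t : ℝ => Real.exp (t - a * t ^ 2)) atTop (nhds 0) := by
    apply Real.tendsto_exp_atBot.comp
    have : Tendsto (fun t : ℝ => t * (a * t - 1)) atTop atTop := by
      apply Tendsto.atTop_mul_atTop₀ tendsto_id
      exact tendsto_atTop_add_const_right _ _ (tendsto_id.const_mul_atTop ha)
    have heq : (fun t : ℝ => t - a * t ^ 2) = fun t => -(t * (a * t - 1)) := by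
      ext t; ring
    rw [heq]
    exact (tendsto_neg_atBot_iff).2 this
  apply squeeze_zero_norm' _ hlim
  filter_upwards [eventually_ge_atTop (0 : ℝ)] with t ht
  rw [Real.norm_eq_abs, abs_mul, abs_of_nonneg ht, abs_of_nonneg (Real.exp_nonneg _)]
  calc t * Real.exp (-(a * t ^ 2)) ≤ Real.exp t * Real.exp (-(a * t ^ 2)) := by
        apply mul_le_mul_of_nonneg_right _ (Real.exp_nonneg _)
        linarith [Real.add_one_le_exp t]
    _ = Real.exp (t - a * t ^ 2) := by rw [← Real.exp_add]; ring_nf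

lemma tendsto_gaussian_atTop (σ x : ℝ) (hσ : 0 < σ) :
    Tendsto (fun μ₂ : ℝ => gaussian μ₂ σ x) atTop (nhds 0) := by
  unfold gaussian
  have h : Tendsto (fun μ₂ : ℝ => Real.exp (-(x - μ₂) ^ 2 / (2 * σ ^ 2))) atTop (nhds 0) := by
    apply Real.tendsto_exp_atBot.comp
    have h1 : Tendsto (fun μ₂ : ℝ => (x - μ₂) ^ 2 / (2 * σ ^ 2)) atTop atTop := by
      apply Tendsto.atTop_div_const (by positivity)
      have h0 : Tendsto (fun μ₂ : ℝ => μ₂ - x) atTop atTop :=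
        tendsto_atTop_add_const_right _ _ tendsto_id
      have h2 := (tendsto_pow_atTop (two_ne_zero)).comp h0
      exact h2.congr (fun t => by simp [Function.comp]; ring)
    have heq : (fun μ₂ : ℝ => -(x - μ₂) ^ 2 / (2 * σ ^ 2))
        = fun μ₂ => -((x - μ₂) ^ 2 / (2 * σ ^ 2)) := by ext t; ring
    rw [heq]
    exact tendsto_neg_atBot_iff.2 h1
  have := h.const_mul ((σ * Real.sqrt (2 * Real.pi))⁻¹)
  simpa using this

lemma tendsto_gaussian_mul_atTop (σ x : ℝ) (hσ : 0 < σ) :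
    Tendsto (fun μ₂ : ℝ => gaussian μ₂ σ x * ((μ₂ - x) / σ ^ 2)) atTop (nhds 0) := by
  have key := tendsto_mul_exp_neg_mul_sq ((2 * σ ^ 2)⁻¹) (by positivity)
  have hshift : Tendsto (fun μ₂ : ℝ => μ₂ - x) atTop atTop :=
    tendsto_atTop_add_const_right _ _ tendsto_id
  have h := (key.comp hshift).const_mul ((σ * Real.sqrt (2 * Real.pi))⁻¹ / σ ^ 2)
  rw [mul_zero] at h
  apply h.congr
  intro μ₂
  unfold gaussian
  rw [Function.comp_apply]
  have : -(x - μ₂) ^ 2 / (2 * σ ^ 2) = -((2 * σ ^ 2)⁻¹ * (μ₂ - x) ^ 2) := by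
    field_simp; ring
  rw [this]
  ring

/-- weak dependence of the score on mixing proportions, separated
components limit: the score difference between two mixtures with different mixing
proportions vanishes as `μ₂ → +∞`. -/
theorem score_weak_dependence_on_proportion_separation (μ₁ σ w w' : ℝ) (hσ : 0 < σ)
    (hw : w ∈ Set.Ioo (0 : ℝ) 1) (hw' : w' ∈ Set.Ioo (0 : ℝ) 1) (x : ℝ) :
    Tendsto
      (fun μ₂ => score (fun y => w * gaussian μ₁ σ y + (1 - w) * gaussian μ₂ σ y) x
        - score (fun y => w' * gaussian μ₁ σ y + (1 - w') * gaussian μ₂ σ y) x)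
      atTop (nhds 0) := by
  have hφ₁ : 0 < gaussian μ₁ σ x := gaussian_pos μ₁ σ x hσ
  have hA := tendsto_gaussian_atTop σ x hσ
  have hB := tendsto_gaussian_mul_atTop σ x hσ
  have hscore : ∀ (v : ℝ), v ∈ Set.Ioo (0 : ℝ) 1 →
      Tendsto (fun μ₂ : ℝ =>
        score (fun y => v * gaussian μ₁ σ y + (1 - v) * gaussian μ₂ σ y) x)
        atTop (nhds ((μ₁ - x) / σ ^ 2)) := by
    intro v hv
    have hnum : Tendsto (fun μ₂ : ℝ =>
        v * (gaussian μ₁ σ x * ((μ₁ - x) / σ ^ 2))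
          + (1 - v) * (gaussian μ₂ σ x * ((μ₂ - x) / σ ^ 2))) atTop
        (nhds (v * (gaussian μ₁ σ x * ((μ₁ - x) / σ ^ 2)))) := by
      have := (hB.const_mul (1 - v)).const_add (v * (gaussian μ₁ σ x * ((μ₁ - x) / σ ^ 2)))
      simpa using this
    have hden : Tendsto (fun μ₂ : ℝ =>
        v * gaussian μ₁ σ x + (1 - v) * gaussian μ₂ σ x) atTop
        (nhds (v * gaussian μ₁ σ x)) := by
      have := (hA.const_mul (1 - v)).const_add (v * gaussian μ₁ σ x)
      simpa using this
    have hdne : v * gaussian μ₁ σ x ≠ 0 := by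
      have := hv.1; positivity
    have h := hnum.div hden hdne
    have heq : v * (gaussian μ₁ σ x * ((μ₁ - x) / σ ^ 2)) / (v * gaussian μ₁ σ x)
        = (μ₁ - x) / σ ^ 2 := by
      have := hv.1.ne'
      field_simp
    rw [heq] at h
    apply h.congr
    intro μ₂
    exact (score_mixture μ₁ μ₂ σ v x hσ hv).symm
  have := (hscore w hw).sub (hscore w' hw')
  simpa using this
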